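/- arXiv:2210.10384 — 7 statements merged into one kernel-verified Lean document; each statement's English description precedes it below -/
import Mathlib

section
/- If X is a hereditarily Baire topological space and E a metric space, then for every mapping f: X → E, the σ-fragmentability index equals the fragmentability index: σ-frag(f) = frag(f). -/
open Set Filter Ordinal ENNReal

universe u v

section Defs

variable {X : Type u} {E : Type v}

/-- `f` restricted to `A` is `ε`-fragmented: every nonempty subset of `A` has a relatively
open nonempty piece on which the oscillation (diameter of the image) of `f` is at most `ε`. -/
def EpsFragOn [TopologicalSpace X] [PseudoEMetricSpace E] (f : X → E) (A : Set X)
    (ε : ℝ≥0∞) : Prop :=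
  ∀ F : Set X, F ⊆ A → F.Nonempty → ∃ V : Set X, IsOpen V ∧ (V ∩ F).Nonempty ∧
    EMetric.diam (f '' (V ∩ F)) ≤ ε

/-- The fragmentability index `frag f = inf {ε > 0 : f is ε-fragmented}` (with `inf ∅ = ∞`). -/
noncomputable def fragIdx [TopologicalSpace X] [PseudoEMetricSpace E] (f : X → E) : ℝ≥0∞ :=
  sInf {ε | 0 < ε ∧ EpsFragOn f Set.univ ε}

/-- A set `H` is resolvable: every nonempty `A ⊆ X` has a relatively open nonempty piece
entirely inside `H` or entirely inside its complement. -/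
def Resolvable [TopologicalSpace X] (H : Set X) : Prop :=
  ∀ A : Set X, A.Nonempty → ∃ U : Set X, IsOpen U ∧ (U ∩ A).Nonempty ∧
    (U ∩ A ⊆ H ∨ U ∩ A ⊆ Hᶜ)

/-- The σ-fragmentability index by resolvable sets. -/
noncomputable def sfragIdx [TopologicalSpace X] [PseudoEMetricSpace E] (f : X → E) : ℝ≥0∞ :=
  sInf {ε | 0 < ε ∧ ∃ H : ℕ → Set X, (∀ n, Resolvable (H n)) ∧ (⋃ n, H n) = Set.univ ∧
    ∀ n, EpsFragOn f (H n) ε}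

/-- `g` is constant on each set of some resolvable partition of `X`, i.e. on each difference
`U (γ+1) \ U γ` of an increasing transfinite sequence of open sets from `∅` to `X`,
continuous at limit ordinals. -/
def ConstOnResolvablePartition [TopologicalSpace X] (g : X → E) : Prop :=
  ∃ (κ : Ordinal.{u}) (U : Ordinal.{u} → Set X),
    (∀ α, IsOpen (U α)) ∧ (∀ α β : Ordinal, α ≤ β → U α ⊆ U β) ∧
    U 0 = ∅ ∧ U κ = Set.univ ∧
    (∀ γ, γ ≤ κ → Order.IsSuccLimit γ → U γ = ⋃ α < γ, U α) ∧
    (∀ γ < κ, ∀ x ∈ U (γ + 1) \ U γ, ∀ y ∈ U (γ + 1) \ U γ, g x = g y)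

/-- The transfinite derivation of open sets in the definition of the oscillation rank
`β(f, ε)`:  `U 0 = ∅`, `U (α+1) = U α ∪ {x ∉ U α : ∃ open V ∋ x, diam f (V \ U α) < ε}`,
and unions at limit ordinals. -/
noncomputable def oscSet [TopologicalSpace X] [PseudoEMetricSpace E] (f : X → E)
    (ε : ℝ≥0∞) (o : Ordinal.{u}) : Set X :=
  Ordinal.limitRecOn o ∅
    (fun _ U => U ∪ {x | x ∉ U ∧ ∃ V : Set X, IsOpen V ∧ x ∈ V ∧
      EMetric.diam (f '' (V \ U)) < ε})
    (fun γ _ ih => ⋃ (β : Ordinal) (h : β < γ), ih β h)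

/-- `f` has countable oscillation rank: `β(f) < ω₁`, i.e. for every `ε > 0` the derivation
reaches `X` at some countable ordinal. -/
def CountableOscRank [TopologicalSpace X] [PseudoEMetricSpace E] (f : X → E) : Prop :=
  ∀ ε : ℝ≥0∞, 0 < ε → ∃ α < ω₁, oscSet f ε α = Set.univ

/-- A transfinite sequence `(V α)_{α ≤ κ}` of open sets has property `*(f, ε)`. -/
def StarProp [TopologicalSpace X] [PseudoEMetricSpace E] (f : X → E) (ε : ℝ≥0∞)
    (κ : Ordinal.{u}) (V : Ordinal.{u} → Set X) : Prop :=
  (∀ α, α ≤ κ → IsOpen (V α)) ∧ (∀ α β : Ordinal, α ≤ β → β ≤ κ → V α ⊆ V β) ∧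
  V 0 = ∅ ∧ V κ = Set.univ ∧
  (∀ γ, γ ≤ κ → Order.IsSuccLimit γ → V γ = ⋃ α < γ, V α) ∧
  (∀ α < κ, ∀ x ∈ V (α + 1) \ V α, ∃ W : Set X, IsOpen W ∧ x ∈ W ∧
    EMetric.diam (f '' (W \ V α)) < ε)

/-- Uniform distance `d(f, g) = sup_x ρ(f x, g x)` (in `[0, ∞]`). -/
noncomputable def unifDist [PseudoEMetricSpace E] (f g : X → E) : ℝ≥0∞ :=
  ⨆ x, edist (f x) (g x)

/-- Distance from `f` to the family of σ-fragmented mappings. -/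
noncomputable def distToSFrag [TopologicalSpace X] [PseudoEMetricSpace E] (f : X → E) : ℝ≥0∞ :=
  ⨅ (g : {g : X → E // sfragIdx g = 0}), unifDist f g.1

end Defs

theorem frag_of_sfrag {X E : Type*} [TopologicalSpace X] [PseudoEMetricSpace E]
    (hX : ∀ F : Set X, IsClosed F → BaireSpace F)
    (f : X → E) {ε : ℝ≥0∞} (H : ℕ → Set X) (hres : ∀ n, Resolvable (H n))
    (hcov : (⋃ n, H n) = Set.univ) (hfrag : ∀ n, EpsFragOn f (H n) ε) :
    EpsFragOn f Set.univ ε := by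
  intro F _ hF
  set C := closure F with hC
  haveI : BaireSpace C := hX C isClosed_closure
  set S : ℕ → Set C := fun n => Subtype.val ⁻¹'
    (⋃ U ∈ {U : Set X | IsOpen U ∧ (U ∩ C ⊆ H n ∨ U ∩ C ⊆ (H n)ᶜ)}, U) with hS
  have hSopen : ∀ n, IsOpen (S n) := fun n =>
    (isOpen_biUnion (fun U hU => hU.1)).preimage continuous_subtype_val
  have hSdense : ∀ n, Dense (S n) := by
    intro n
    rw [dense_iff_inter_open]
    intro O hO hOne
    obtain ⟨W, hW, rfl⟩ := isOpen_induced_iff.1 hO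
    obtain ⟨x, hx⟩ := hOne
    have hWC : (W ∩ C).Nonempty := ⟨x, hx, x.2⟩
    obtain ⟨U, hU, hUne, hUsub⟩ := hres n (W ∩ C) hWC
    obtain ⟨y, hyU, hyW, hyC⟩ := hUne
    refine ⟨⟨y, hyC⟩, hyW, ?_⟩
    simp only [hS, mem_preimage, mem_iUnion, mem_setOf_eq]
    refine ⟨U ∩ W, ⟨⟨hU.inter hW, ?_⟩, hyU, hyW⟩⟩
    rcases hUsub with h | h
    · exact Or.inl fun z hz => h ⟨hz.1.1, hz.1.2, hz.2⟩
    · exact Or.inr fun z hz => h ⟨hz.1.1, hz.1.2, hz.2⟩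
  haveI hCne : Nonempty C := ⟨⟨hF.choose, subset_closure hF.choose_spec⟩⟩
  obtain ⟨x, hx⟩ := (dense_iInter_of_isOpen hSopen hSdense).nonempty
  have hxC : (x : X) ∈ C := x.2
  obtain ⟨m, hm⟩ : ∃ m, (x : X) ∈ H m := by
    have : (x : X) ∈ ⋃ n, H n := hcov ▸ mem_univ _
    exact mem_iUnion.1 this
  have hxS := mem_iInter.1 hx m
  simp only [hS, mem_preimage, mem_iUnion, mem_setOf_eq] at hxS
  obtain ⟨U, ⟨hUopen, hUsub⟩, hxU⟩ := hxS
  have hUC : U ∩ C ⊆ H m := by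
    rcases hUsub with h | h
    · exact h
    · exact absurd hm (h ⟨hxU, hxC⟩)
  have hUF : (U ∩ F).Nonempty := mem_closure_iff.1 hxC U hUopen hxU
  have hUFsub : U ∩ F ⊆ H m := fun z hz => hUC ⟨hz.1, subset_closure hz.2⟩
  obtain ⟨V, hVopen, hVne, hVdiam⟩ := hfrag m (U ∩ F) hUFsub hUF
  refine ⟨V ∩ U, hVopen.inter hUopen, ?_, ?_⟩
  · obtain ⟨z, hzV, hzU, hzF⟩ := hVne
    exact ⟨z, ⟨hzV, hzU⟩, hzF⟩
  · rw [inter_assoc]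
    exact hVdiam

/-- If `X` is hereditarily Baire and `E` metric, then `σ-frag(f) = frag(f)`. -/
theorem stmt_0 {X E : Type*} [TopologicalSpace X] [MetricSpace E]
    (hX : ∀ F : Set X, IsClosed F → BaireSpace F)
    (f : X → E) : sfragIdx f = fragIdx f := by
  apply le_antisymm
  · apply sInf_le_sInf
    rintro ε ⟨hε, hfrag⟩
    refine ⟨hε, fun _ => Set.univ,
      fun _ A hA => ⟨Set.univ, isOpen_univ, by simpa using hA, Or.inl (subset_univ _)⟩,
      iUnion_const Set.univ, fun _ => hfrag⟩
  · apply sInf_le_sInf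
    rintro ε ⟨hε, H, hres, hcov, hfrag⟩
    exact ⟨hε, frag_of_sfrag hX f H hres hcov hfrag⟩
end

section
/- Let X be a topological space and (E,ρ) a metric space. If g: X → E is constant on each set of some resolvable partition of X, then g is fragmented (frag(g) = 0). -/
open Set Filter Ordinal ENNReal

universe u v

/-- a map constant on each set of some resolvable partition is fragmented. -/
theorem stmt_3 {X E : Type*} [TopologicalSpace X] [MetricSpace E]
    (g : X → E) (hg : ConstOnResolvablePartition g) : fragIdx g = 0 := by
  obtain ⟨κ, U, hopen, hmono, hU0, hUκ, hlim, hconst⟩ := hg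
  have key : ∀ ε : ℝ≥0∞, 0 < ε → EpsFragOn g Set.univ ε := by
    intro ε hε F _ hF
    have hκS : κ ∈ {γ : Ordinal | (U γ ∩ F).Nonempty} := by
      simpa [hUκ] using hF
    have hSne : {γ : Ordinal | (U γ ∩ F).Nonempty}.Nonempty := ⟨κ, hκS⟩
    obtain ⟨γ, hγS, hγmin⟩ := wellFounded_lt.has_min _ hSne
    have hγmin' : ∀ β < γ, U β ∩ F = ∅ := by
      intro β hβ
      by_contra h
      exact hγmin β (Set.nonempty_iff_ne_empty.2 h) hβ
    have hγ0 : γ ≠ 0 := by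
      rintro rfl
      rcases hγS with ⟨x, hx, -⟩
      rw [hU0] at hx
      exact hx
    have hγκ : γ ≤ κ := not_lt.1 fun h => hγmin κ hκS h
    have hnotlim : ¬ Order.IsSuccLimit γ := by
      intro hl
      rcases hγS with ⟨x, hxU, hxF⟩
      rw [hlim γ hγκ hl] at hxU
      simp only [Set.mem_iUnion] at hxU
      obtain ⟨α, hα, hxα⟩ := hxU
      have h := hγmin' α hα
      rw [Set.eq_empty_iff_forall_notMem] at h
      exact h x ⟨hxα, hxF⟩
    obtain ⟨δ, rfl⟩ : ∃ δ, γ = δ + 1 := by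
      rcases Ordinal.zero_or_succ_or_isSuccLimit γ with h | ⟨δ, hδ⟩ | h
      · exact absurd h hγ0
      · exact ⟨δ, by rw [← hδ, Ordinal.add_one_eq_succ]⟩
      · exact absurd h hnotlim
    have hδκ : δ < κ := lt_of_lt_of_le (Order.lt_succ δ) (by simpa using hγκ)
    refine ⟨U (δ + 1), hopen _, hγS, ?_⟩
    rcases hγS with ⟨x₀, hx₀U, hx₀F⟩
    have hδempty := hγmin' δ (Order.lt_succ δ)
    rw [Set.eq_empty_iff_forall_notMem] at hδempty
    have hx₀δ : x₀ ∉ U δ := fun h => hδempty x₀ ⟨h, hx₀F⟩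
    have hsub : g '' (U (δ + 1) ∩ F) ⊆ {g x₀} := by
      rintro _ ⟨y, ⟨hyU, hyF⟩, rfl⟩
      have hyδ : y ∉ U δ := fun h => hδempty y ⟨h, hyF⟩
      exact hconst δ hδκ y ⟨hyU, hyδ⟩ x₀ ⟨hx₀U, hx₀δ⟩
    calc EMetric.diam (g '' (U (δ + 1) ∩ F)) ≤ EMetric.diam ({g x₀} : Set E) :=
          EMetric.diam_mono hsub
      _ = 0 := EMetric.diam_singleton
      _ ≤ ε := zero_le
  have hle : ∀ ε : ℝ≥0∞, 0 < ε → fragIdx g ≤ ε := fun ε hε => sInf_le ⟨hε, key ε hε⟩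
  refine le_antisymm ?_ zero_le
  refine ENNReal.le_of_forall_pos_le_add fun ε hε _ => ?_
  simpa using hle ε (by exact_mod_cast hε)
end

section
/- Let X be a topological space and (E,ρ) a metric space. A mapping f: X → E is fragmented if and only if there exists a sequence (f_n) of mappings converging uniformly to f such that each f_n is constant on each set of some resolvable partition of X. -/
open Set Filter Ordinal ENNReal

universe u v

section Aux

variable {X : Type u} {E : Type v} [TopologicalSpace X] [MetricSpace E]

lemma exists_const_approx (f : X → E) {ε : ℝ≥0∞} (hfrag : EpsFragOn f Set.univ ε) :
    ∃ g : X → E, ConstOnResolvablePartition g ∧ ∀ x, edist (f x) (g x) ≤ ε := by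
  unfold ConstOnResolvablePartition
  classical
  rcases isEmpty_or_nonempty X with hX | hX
  · refine ⟨f, ⟨0, fun _ => ∅, fun _ => isOpen_empty, fun _ _ _ => le_refl _,
      rfl, ?_, ?_, ?_⟩, fun x => hX.elim x⟩
    · exact Set.eq_univ_of_forall fun x => hX.elim x
    · intro γ hγ hlim
      exact absurd (nonpos_iff_eq_zero.mp hγ) hlim.ne_bot
    · intro γ hγ
      exact absurd hγ (not_lt_bot (a := γ))
  · -- main construction
    set step : Set X → Set X := fun S =>
      if h : Sᶜ.Nonempty then (hfrag Sᶜ (Set.subset_univ _) h).choose else ∅ with hstep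
    have hstepOpen : ∀ S, IsOpen (step S) := by
      intro S
      rw [hstep]
      dsimp only
      split_ifs with h
      · exact (hfrag Sᶜ (Set.subset_univ _) h).choose_spec.1
      · exact isOpen_empty
    have hstepNe : ∀ S, Sᶜ.Nonempty → (step S ∩ Sᶜ).Nonempty := by
      intro S h
      rw [hstep]
      dsimp only
      rw [dif_pos h]
      exact (hfrag Sᶜ (Set.subset_univ _) h).choose_spec.2.1
    have hstepDiam : ∀ S, Sᶜ.Nonempty → EMetric.diam (f '' (step S ∩ Sᶜ)) ≤ ε := by
      intro S h
      rw [hstep]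
      dsimp only
      rw [dif_pos h]
      exact (hfrag Sᶜ (Set.subset_univ _) h).choose_spec.2.2
    set U : Ordinal.{u} → Set X := fun o =>
      Ordinal.limitRecOn o ∅ (fun _ S => S ∪ step S)
        (fun γ _ ih => ⋃ (β : Ordinal) (h : β < γ), ih β h) with hUdef
    have hU0 : U 0 = ∅ := Ordinal.limitRecOn_zero _ _ _
    have hUsucc : ∀ α, U (α + 1) = U α ∪ step (U α) := by
      intro α
      rw [hUdef]
      dsimp only
      rw [Ordinal.add_one_eq_succ, Ordinal.limitRecOn_succ]
    have hUlim : ∀ γ : Ordinal.{u}, Order.IsSuccLimit γ → U γ = ⋃ α < γ, U α := by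
      intro γ hγ
      rw [hUdef]
      dsimp only
      rw [Ordinal.limitRecOn_limit _ _ _ _ hγ]
    have hUopen : ∀ o, IsOpen (U o) := by
      intro o
      induction o using Ordinal.limitRecOn with
      | zero => rw [hU0]; exact isOpen_empty
      | add_one α ih =>
        rw [hUsucc]
        exact ih.union (hstepOpen _)
      | limit γ hγ ih =>
        rw [hUlim γ hγ]
        exact isOpen_iUnion fun β => isOpen_iUnion fun hβ => ih β hβ
    have hUmono : ∀ α β : Ordinal.{u}, α ≤ β → U α ⊆ U β := by
      intro α β
      induction β using Ordinal.limitRecOn with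
      | zero => intro h; rw [nonpos_iff_eq_zero.mp h]
      | add_one b ih =>
        intro h
        rcases (Order.le_succ_iff_eq_or_le.mp h) with rfl | h'
        · exact le_refl _
        · rw [hUsucc]
          exact (ih h').trans Set.subset_union_left
      | limit γ hγ ih =>
        intro h
        rcases eq_or_lt_of_le h with rfl | h'
        · exact le_refl _
        · rw [hUlim γ hγ]
          intro z hz
          exact Set.mem_iUnion₂.mpr ⟨α, h', hz⟩
    have hterm : ∃ κ : Ordinal.{u}, U κ = Set.univ := by
      by_contra hc
      push_neg at hc
      have hne : ∀ o : Ordinal.{u}, ((U o)ᶜ).Nonempty := fun o =>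
        Set.nonempty_compl.mpr (hc o)
      have hpiece : ∀ o : Ordinal.{u}, (step (U o) ∩ (U o)ᶜ).Nonempty := fun o =>
        hstepNe _ (hne o)
      have hinj : Function.Injective (fun o : Ordinal.{u} => (hpiece o).choose) := by
        have hp1 : ∀ o, (hpiece o).choose ∈ U (o + 1) := fun o => by
          rw [hUsucc]
          exact Set.mem_union_right _ (hpiece o).choose_spec.1
        have hp2 : ∀ o, (hpiece o).choose ∉ U o := fun o => (hpiece o).choose_spec.2
        intro a b hab
        have hab' : (hpiece a).choose = (hpiece b).choose := hab
        by_contra hne'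
        rcases Ne.lt_or_gt hne' with hlt | hlt
        · exact hp2 b (hab' ▸ hUmono (a + 1) b
            (by rw [Ordinal.add_one_eq_succ]; exact Order.succ_le_of_lt hlt) (hp1 a))
        · exact hp2 a (hab'.symm ▸ hUmono (b + 1) a
            (by rw [Ordinal.add_one_eq_succ]; exact Order.succ_le_of_lt hlt) (hp1 b))
      exact not_small_ordinal.{u} (small_of_injective hinj)
    set κ : Ordinal.{u} := sInf {o | U o = Set.univ} with hκdef
    have hκset : {o : Ordinal.{u} | U o = Set.univ}.Nonempty := hterm
    have hκmem : U κ = Set.univ := csInf_mem hκset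
    have hκmin : ∀ o, U o = Set.univ → κ ≤ o := fun o h => (isLeast_csInf hκset).2 h
    have hSne : ∀ x : X, {δ : Ordinal.{u} | x ∈ U (δ + 1)}.Nonempty := by
      intro x
      refine ⟨κ, ?_⟩
      exact hUmono κ (κ + 1) (by rw [Ordinal.add_one_eq_succ]; exact Order.le_succ κ) (hκmem ▸ Set.mem_univ x)
    set d : X → Ordinal.{u} := fun x => sInf {δ | x ∈ U (δ + 1)} with hddef
    have hd1 : ∀ x, x ∈ U (d x + 1) := fun x => csInf_mem (hSne x)
    have hdle : ∀ x δ, x ∈ U (δ + 1) → d x ≤ δ := fun x δ h => (isLeast_csInf (hSne x)).2 h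
    have hd2 : ∀ x, x ∉ U (d x) := by
      intro x hx
      rcases Ordinal.zero_or_succ_or_isSuccLimit (d x) with h0 | ⟨a, ha⟩ | hlim
      · rw [h0, hU0] at hx
        exact hx
      · have : d x ≤ a := hdle x a (by rw [Ordinal.add_one_eq_succ, ha]; exact hx)
        rw [← ha] at this
        exact absurd this (not_le.mpr (Order.lt_succ a))
      · rw [hUlim _ hlim] at hx
        obtain ⟨β, hβ, hxβ⟩ := Set.mem_iUnion₂.mp hx
        have : d x ≤ β := hdle x β (hUmono β (β + 1) (by rw [Ordinal.add_one_eq_succ]; exact Order.le_succ β) hxβ)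
        exact absurd (this.trans_lt hβ) (lt_irrefl _)
    have hpieceEq : ∀ o : Ordinal.{u}, U (o + 1) \ U o = step (U o) ∩ (U o)ᶜ := by
      intro o
      rw [hUsucc]
      ext z
      simp only [Set.mem_diff, Set.mem_union, Set.mem_inter_iff, Set.mem_compl_iff]
      tauto
    set q : Ordinal.{u} → X := fun o =>
      if h : (U (o + 1) \ U o).Nonempty then h.choose else Classical.arbitrary X with hqdef
    have hq : ∀ o, (U (o + 1) \ U o).Nonempty → q o ∈ U (o + 1) \ U o := by
      intro o h
      rw [hqdef]
      dsimp only
      rw [dif_pos h]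
      exact h.choose_spec
    refine ⟨fun x => f (q (d x)), ⟨κ, U, hUopen, hUmono, hU0, hκmem,
      fun γ _ hγ => hUlim γ hγ, ?_⟩, ?_⟩
    · -- constancy
      have key : ∀ γ : Ordinal.{u}, ∀ x ∈ U (γ + 1) \ U γ, d x = γ := by
        intro γ x hx
        refine le_antisymm (hdle x γ hx.1) ?_
        by_contra hlt
        push_neg at hlt
        exact hx.2 (hUmono (d x + 1) γ
          (by rw [Ordinal.add_one_eq_succ]; exact Order.succ_le_of_lt hlt) (hd1 x))
      intro γ _ x hx y hy
      show f (q (d x)) = f (q (d y))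
      rw [key γ x hx, key γ y hy]
    · -- distance bound
      intro x
      have hxmem : x ∈ U (d x + 1) \ U (d x) := ⟨hd1 x, hd2 x⟩
      have hne' : (U (d x + 1) \ U (d x)).Nonempty := ⟨x, hxmem⟩
      have hqmem := hq (d x) hne'
      have hcne : ((U (d x))ᶜ).Nonempty := ⟨x, hd2 x⟩
      have hdiam := hstepDiam (U (d x)) hcne
      rw [← hpieceEq] at hdiam
      calc edist (f x) (f (q (d x)))
          ≤ EMetric.diam (f '' (U (d x + 1) \ U (d x))) :=
            EMetric.edist_le_diam_of_mem (Set.mem_image_of_mem f hxmem)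
              (Set.mem_image_of_mem f hqmem)
        _ ≤ ε := hdiam


end Aux

/-- `f` is fragmented iff it is the uniform limit of a sequence of maps each
constant on each set of some resolvable partition of `X`. -/
theorem stmt_4 {X E : Type*} [TopologicalSpace X] [MetricSpace E] (f : X → E) :
    fragIdx f = 0 ↔ ∃ fn : ℕ → X → E, (∀ n, ConstOnResolvablePartition (fn n)) ∧
      TendstoUniformly fn f Filter.atTop := by
  constructor
  · intro h0
    have hfrag : ∀ ε : ℝ≥0∞, 0 < ε → EpsFragOn f Set.univ ε := by
      intro ε hε
      have hlt : fragIdx f < ε := lt_of_le_of_lt (le_of_eq h0) hε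
      rw [fragIdx, sInf_lt_iff] at hlt
      obtain ⟨ε', ⟨hε'0, hε'⟩, hlt'⟩ := hlt
      intro F hF hne
      obtain ⟨V, hV, h1, h2⟩ := hε' F hF hne
      exact ⟨V, hV, h1, h2.trans hlt'.le⟩
    choose g hg1 hg2 using fun n : ℕ =>
      exists_const_approx f (hfrag ((n : ℝ≥0∞) + 1)⁻¹
        (ENNReal.inv_pos.mpr (by simp)))
    refine ⟨g, hg1, ?_⟩
    rw [Metric.tendstoUniformly_iff]
    intro δ hδ
    obtain ⟨N, hN⟩ := exists_nat_one_div_lt hδ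
    filter_upwards [Filter.eventually_ge_atTop N] with n hn x
    have h1 : dist (f x) (g n x) ≤ ((n : ℝ) + 1)⁻¹ := by
      rw [dist_edist]
      calc (edist (f x) (g n x)).toReal ≤ (((n : ℝ≥0∞) + 1)⁻¹).toReal :=
          ENNReal.toReal_mono (ENNReal.inv_ne_top.mpr (by simp)) (hg2 n x)
        _ = ((n : ℝ) + 1)⁻¹ := by
          rw [ENNReal.toReal_inv, ENNReal.toReal_add (by simp) (by simp),
            ENNReal.toReal_natCast, ENNReal.toReal_one]
    have h2 : ((n : ℝ) + 1)⁻¹ ≤ ((N : ℝ) + 1)⁻¹ := by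
      have : (N : ℝ) + 1 ≤ (n : ℝ) + 1 := by
        have : (N : ℝ) ≤ (n : ℝ) := Nat.cast_le.mpr hn
        linarith
      exact inv_anti₀ (by positivity) this
    calc dist (f x) (g n x) ≤ ((n : ℝ) + 1)⁻¹ := h1
      _ ≤ ((N : ℝ) + 1)⁻¹ := h2
      _ < δ := by rwa [one_div] at hN
  · rintro ⟨fn, hconst, hunif⟩
    have hfrag : ∀ ε : ℝ≥0∞, 0 < ε → EpsFragOn f Set.univ ε := by
      intro ε hε
      set t : ℝ≥0∞ := min ε 1 with ht
      have ht0 : 0 < t := lt_min hε zero_lt_one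
      have httop : t ≠ ⊤ := ne_top_of_le_ne_top ENNReal.one_ne_top (min_le_right _ _)
      have htR : 0 < t.toReal := ENNReal.toReal_pos ht0.ne' httop
      rw [Metric.tendstoUniformly_iff] at hunif
      obtain ⟨n, hn⟩ := (hunif (t.toReal / 3) (by positivity)).exists
      obtain ⟨κ, U, hopen, hmono, hU0, hUκ, hUlim, hconst'⟩ := hconst n
      intro F _ hFne
      have hκF : (U κ ∩ F).Nonempty := by rw [hUκ, Set.univ_inter]; exact hFne
      have hSne : {γ : Ordinal | (U γ ∩ F).Nonempty}.Nonempty := ⟨κ, hκF⟩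
      set γ₀ := sInf {γ : Ordinal | (U γ ∩ F).Nonempty} with hγ₀
      have hmem : (U γ₀ ∩ F).Nonempty := csInf_mem hSne
      have hminim : ∀ β < γ₀, ¬(U β ∩ F).Nonempty := by
        intro β hβ h
        exact absurd ((isLeast_csInf hSne).2 h) (not_le.mpr hβ)
      have hγκ : γ₀ ≤ κ := (isLeast_csInf hSne).2 hκF
      rcases Ordinal.zero_or_succ_or_isSuccLimit γ₀ with h0 | ⟨δ, hδ⟩ | hlim
      · rw [h0, hU0, Set.empty_inter] at hmem
        exact absurd hmem Set.not_nonempty_empty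
      · have hδ' : γ₀ = δ + 1 := by rw [← hδ, Ordinal.add_one_eq_succ]
        have hδγ : δ < γ₀ := by rw [← hδ]; exact Order.lt_succ δ
        have hδκ : δ < κ := lt_of_lt_of_le hδγ hγκ
        refine ⟨U γ₀, hopen γ₀, hmem, ?_⟩
        apply EMetric.diam_le
        rintro a ⟨x, hx, rfl⟩ b ⟨y, hy, rfl⟩
        have hxp : x ∈ U (δ + 1) \ U δ := by
          refine ⟨by rw [← hδ']; exact hx.1, fun hc => hminim δ hδγ ⟨x, hc, hx.2⟩⟩
        have hyp : y ∈ U (δ + 1) \ U δ := by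
          refine ⟨by rw [← hδ']; exact hy.1, fun hc => hminim δ hδγ ⟨y, hc, hy.2⟩⟩
        have heq : fn n x = fn n y := hconst' δ hδκ x hxp y hyp
        rw [edist_dist]
        have hd : dist (f x) (f y) ≤ 2 * t.toReal / 3 := by
          have h1 := hn x
          have h2 := hn y
          calc dist (f x) (f y) ≤ dist (f x) (fn n x) + dist (fn n x) (f y) :=
              dist_triangle _ _ _
            _ = dist (f x) (fn n x) + dist (fn n y) (f y) := by rw [heq]
            _ ≤ t.toReal / 3 + t.toReal / 3 :=
              add_le_add h1.le (by rw [dist_comm]; exact h2.le)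
            _ = 2 * t.toReal / 3 := by ring
        calc ENNReal.ofReal (dist (f x) (f y)) ≤ ENNReal.ofReal t.toReal :=
            ENNReal.ofReal_le_ofReal (hd.trans (by linarith))
          _ = t := ENNReal.ofReal_toReal httop
          _ ≤ ε := min_le_left _ _
      · rw [hUlim γ₀ hγκ hlim] at hmem
        obtain ⟨z, hz1, hz2⟩ := hmem
        obtain ⟨β, hβ, hzβ⟩ := Set.mem_iUnion₂.mp hz1
        exact absurd ⟨z, hzβ, hz2⟩ (hminim β hβ)
    have hbot : sInf {ε | 0 < ε ∧ EpsFragOn f Set.univ ε} = (⊥ : ℝ≥0∞) := by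
      rw [sInf_eq_bot]
      intro b hb
      rcases eq_or_ne b ⊤ with rfl | hbtop
      · exact ⟨1, ⟨one_pos, hfrag 1 one_pos⟩, ENNReal.one_lt_top⟩
      · have hb0 : 0 < b := hb
        refine ⟨b / 2, ⟨ENNReal.half_pos hb0.ne', hfrag _ (ENNReal.half_pos hb0.ne')⟩,
          ENNReal.half_lt_self hb0.ne' hbtop⟩
    rw [fragIdx, hbot]
    rfl
end

section
/- Let X be a topological space and (E,ρ) a separable metric space. Then every mapping f: X → E of the first resolvable class is σ-fragmented by resolvable sets, i.e., σ-frag(f) = 0. -/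
open Set Filter Ordinal ENNReal

universe u v

/-- if `E` is separable metric, every map of the first resolvable class is
σ-fragmented by resolvable sets. -/
theorem stmt_5 {X E : Type*} [TopologicalSpace X] [MetricSpace E]
    [TopologicalSpace.SeparableSpace E] (f : X → E)
    (hf : ∀ U : Set E, IsOpen U → ∃ H : ℕ → Set X, (∀ n, Resolvable (H n)) ∧
      f ⁻¹' U = ⋃ n, H n) :
    sfragIdx f = 0 := by
  have key : ∀ ε : ℝ≥0∞, 0 < ε → ε ∈ {ε | 0 < ε ∧ ∃ H : ℕ → Set X,
      (∀ n, Resolvable (H n)) ∧ (⋃ n, H n) = Set.univ ∧ ∀ n, EpsFragOn f (H n) ε} := by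
    intro ε hε
    refine ⟨hε, ?_⟩
    by_cases hE : Nonempty E
    · obtain ⟨s, hsc, hsd⟩ := TopologicalSpace.exists_countable_dense E
      have hsne : s.Nonempty := hsd.nonempty
      obtain ⟨e, hrange⟩ := hsc.exists_eq_range hsne
      -- for each k, decompose preimage of the ball into resolvable sets
      have hball : ∀ k : ℕ, ∃ H : ℕ → Set X, (∀ n, Resolvable (H n)) ∧
          f ⁻¹' (Metric.eball (e k) (ε / 2)) = ⋃ n, H n :=
        fun k => hf _ EMetric.isOpen_ball
      choose G hGres hGcover using hball
      refine ⟨fun n => G n.unpair.1 n.unpair.2, fun n => hGres _ _, ?_, ?_⟩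
      · apply Set.eq_univ_of_forall
        intro x
        have hx : f x ∈ closure s := by rw [hsd.closure_eq]; trivial
        have h2 : (0 : ℝ≥0∞) < ε / 2 := ENNReal.div_pos hε.ne' (by norm_num)
        rcases EMetric.mem_closure_iff.mp hx (ε / 2) h2 with ⟨y, hy, hdy⟩
        rw [hrange] at hy
        rcases hy with ⟨k, rfl⟩
        have : x ∈ f ⁻¹' (Metric.eball (e k) (ε / 2)) := by
          simpa [Metric.mem_eball] using hdy
        rw [hGcover k] at this
        rcases Set.mem_iUnion.mp this with ⟨m, hm⟩
        exact Set.mem_iUnion.mpr ⟨Nat.pair k m, by simpa using hm⟩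
      · intro n F hF hFne
        refine ⟨Set.univ, isOpen_univ, by simpa using hFne, ?_⟩
        have hsub : F ⊆ f ⁻¹' (Metric.eball (e n.unpair.1) (ε / 2)) := by
          rw [hGcover]
          exact hF.trans (Set.subset_iUnion _ n.unpair.2)
        have himg : f '' (Set.univ ∩ F) ⊆ Metric.eball (e n.unpair.1) (ε / 2) := by
          rintro _ ⟨x, ⟨-, hxF⟩, rfl⟩
          exact hsub hxF
        calc EMetric.diam (f '' (Set.univ ∩ F))
            ≤ EMetric.diam (Metric.eball (e n.unpair.1) (ε / 2)) := EMetric.diam_mono himg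
          _ ≤ 2 * (ε / 2) := EMetric.diam_ball
          _ = ε := ENNReal.mul_div_cancel' (by norm_num) (by norm_num)
    · have hX : IsEmpty X := ⟨fun x => hE ⟨f x⟩⟩
      refine ⟨fun _ => Set.univ, ?_, Set.iUnion_const _, ?_⟩
      · intro n A hA
        exact (hX.false hA.some).elim
      · intro n F _ hFne
        exact (hX.false hFne.some).elim
  have hle : ∀ ε : ℝ≥0∞, 0 < ε → sfragIdx f ≤ ε := fun ε hε => sInf_le (key ε hε)
  refine le_antisymm ?_ zero_le
  refine ENNReal.le_of_forall_pos_le_add fun ε hε _ => ?_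
  simpa using hle ε (by exact_mod_cast hε)
end

section
/- Let X be a topological space, (E,ρ) a metric space, and define d(f,g) = sup_x ρ(f(x),g(x)) and d(f,F) = inf{d(f,g) : g ∈ F}. Then for every mapping f: X → E: (1/2)·σ-frag(f) ≤ d(f, σFrag(X,E)) ≤ σ-frag(f), where σFrag(X,E) is the set of all σ-fragmented mappings X → E. -/
open Set Filter Ordinal ENNReal

universe u v

section Aux

variable {X : Type u} {E : Type v}

/-- Transfinite iteration of a "next open set" operator. -/
noncomputable def stageV {X : Type u} (c : Set X → Set X) (o : Ordinal.{u}) : Set X :=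
  c (⋃ β : Set.Iio o, stageV c β.1)
termination_by o
decreasing_by exact β.2

/-- The union of all previous stages. -/
noncomputable def prevU {X : Type u} (c : Set X → Set X) (o : Ordinal.{u}) : Set X :=
  ⋃ β : Set.Iio o, stageV c β.1

theorem stageV_eq {X : Type u} (c : Set X → Set X) (o : Ordinal.{u}) :
    stageV c o = c (prevU c o) := by
  rw [stageV]; rfl

theorem stageV_subset_prevU {X : Type u} (c : Set X → Set X) {β o : Ordinal.{u}} (h : β < o) :
    stageV c β ⊆ prevU c o :=
  Set.subset_iUnion (fun β : Set.Iio o => stageV c β.1) ⟨β, h⟩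

/-- Core lemma: if `f` is `ε`-fragmented on `A`, then `A` admits a partition into pieces
of `f`-oscillation at most `ε`, such that every nonempty subset of `A` has a relatively open
nonempty part contained in a single piece. -/
theorem exists_partition [TopologicalSpace X] [PseudoEMetricSpace E]
    (f : X → E) (A : Set X) (ε : ℝ≥0∞) (hfrag : EpsFragOn f A ε) :
    ∃ P : X → Set X, (∀ x ∈ A, x ∈ P x) ∧ (∀ x ∈ A, P x ⊆ A) ∧
      (∀ x ∈ A, ∀ y ∈ P x, P y = P x) ∧ (∀ x ∈ A, EMetric.diam (f '' P x) ≤ ε) ∧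
      (∀ F, F ⊆ A → F.Nonempty → ∃ V, IsOpen V ∧ (V ∩ F).Nonempty ∧
        ∃ x ∈ A, V ∩ F ⊆ P x) := by
  classical
  set c : Set X → Set X := fun U =>
    if h : (A \ U).Nonempty then (hfrag (A \ U) Set.diff_subset h).choose else Set.univ with hc
  have hcspec : ∀ U : Set X, (A \ U).Nonempty → IsOpen (c U) ∧ (c U ∩ (A \ U)).Nonempty ∧
      EMetric.diam (f '' (c U ∩ (A \ U))) ≤ ε := by
    intro U h
    have := (hfrag (A \ U) Set.diff_subset h).choose_spec
    simpa [hc, dif_pos h] using this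
  set V : Ordinal.{u} → Set X := fun o => stageV c o with hV
  set U : Ordinal.{u} → Set X := fun o => prevU c o with hU
  have hVeq : ∀ o, V o = c (U o) := fun o => stageV_eq c o
  have hVU : ∀ {β o : Ordinal.{u}}, β < o → V β ⊆ U o := fun h => stageV_subset_prevU c h
  -- coverage
  have hcover : ∃ κ, A ⊆ U κ := by
    by_contra hcon
    push_neg at hcon
    have hne : ∀ o, (A \ U o).Nonempty := fun o => Set.diff_nonempty.mpr (hcon o)
    have hpt : ∀ o, ((V o) ∩ (A \ U o)).Nonempty := by
      intro o
      have := (hcspec (U o) (hne o)).2.1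
      rwa [← hVeq o] at this
    set x : Ordinal.{u} → X := fun o => (hpt o).choose with hxdef
    have hxmem : ∀ o, x o ∈ V o ∩ (A \ U o) := fun o => (hpt o).choose_spec
    have hinj : Function.Injective x := by
      intro o o' hoo
      by_contra hne'
      rcases lt_or_gt_of_ne hne' with h | h
      · exact ((hxmem o').2.2) (hoo ▸ hVU h (hxmem o).1)
      · exact ((hxmem o).2.2) (hoo ▸ hVU h (hxmem o').1)
    exact Cardinal.not_injective_limitation_set x (hinj.injOn)
  obtain ⟨κ, hκ⟩ := hcover
  -- the rank function
  set γ : X → Ordinal.{u} := fun y => sInf {o | y ∈ V o} with hγ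
  have hsetne : ∀ y ∈ A, {o | y ∈ V o}.Nonempty := by
    intro y hy
    have := hκ hy
    obtain ⟨s, ⟨⟨β, hβ⟩, rfl⟩, hys⟩ := this
    exact ⟨β, hys⟩
  have hγmem : ∀ y ∈ A, y ∈ V (γ y) := fun y hy => csInf_mem (hsetne y hy)
  have hγnotU : ∀ y ∈ A, y ∉ U (γ y) := by
    intro y hy hyU
    obtain ⟨s, ⟨⟨β, hβ⟩, rfl⟩, hys⟩ := hyU
    exact absurd (csInf_le' (s := {o | y ∈ V o}) hys) (not_le.mpr hβ)
  set Q : Ordinal.{u} → Set X := fun o => V o ∩ (A \ U o) with hQ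
  refine ⟨fun y => Q (γ y), ?_, ?_, ?_, ?_, ?_⟩
  · exact fun y hy => ⟨hγmem y hy, hy, hγnotU y hy⟩
  · exact fun y _ => fun z hz => hz.2.1
  · -- partition property
    intro y hy z hz
    have hzA : z ∈ A := hz.2.1
    have hzV : z ∈ V (γ y) := hz.1
    have hle : γ z ≤ γ y := csInf_le' hzV
    have hge : γ y ≤ γ z := by
      by_contra hlt
      push_neg at hlt
      exact hz.2.2 (hVU hlt (hγmem z hzA))
    show Q (γ z) = Q (γ y)
    rw [le_antisymm hle hge]
  · -- small oscillation
    intro y hy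
    have hne : (A \ U (γ y)).Nonempty := ⟨y, hy, hγnotU y hy⟩
    have := (hcspec (U (γ y)) hne).2.2
    rwa [← hVeq (γ y)] at this
  · -- relatively open pieces
    intro F hFA hFne
    set S : Set Ordinal.{u} := {o | (V o ∩ F).Nonempty} with hS
    have hSne : S.Nonempty := by
      obtain ⟨y, hy⟩ := hFne
      exact ⟨γ y, ⟨y, hγmem y (hFA hy), hy⟩⟩
    set μ := sInf S with hμdef
    have hμ : (V μ ∩ F).Nonempty := csInf_mem hSne
    have hFU : ∀ z ∈ F, z ∉ U μ := by
      intro z hzF hzU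
      obtain ⟨s, ⟨⟨β, hβ⟩, rfl⟩, hzs⟩ := hzU
      exact absurd (csInf_le' (s := S) ⟨z, hzs, hzF⟩) (not_le.mpr hβ)
    obtain ⟨x, hxV, hxF⟩ := hμ
    have hxA : x ∈ A := hFA hxF
    have hneU : (A \ U μ).Nonempty := ⟨x, hxA, hFU x hxF⟩
    have hγx : γ x = μ := by
      refine le_antisymm (csInf_le' hxV) ?_
      by_contra hlt
      push_neg at hlt
      exact absurd (csInf_le' (s := S) ⟨x, hγmem x hxA, hxF⟩) (not_le.mpr hlt)
    refine ⟨V μ, ?_, ⟨x, hxV, hxF⟩, x, hxA, ?_⟩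
    · rw [hVeq μ]; exact (hcspec (U μ) hneU).1
    · intro z hz
      show z ∈ Q (γ x)
      rw [hγx]
      exact ⟨hz.1, hFA hz.2, hFU z hz.2⟩

theorem resolvable_univ [TopologicalSpace X] : Resolvable (Set.univ : Set X) := by
  intro A hA
  exact ⟨Set.univ, isOpen_univ, by simpa using hA, Or.inl (fun x _ => trivial)⟩

theorem resolvable_compl [TopologicalSpace X] {H : Set X} (h : Resolvable H) :
    Resolvable Hᶜ := by
  intro A hA
  obtain ⟨U, hU, hUA, hor⟩ := h A hA
  exact ⟨U, hU, hUA, by rw [compl_compl]; exact hor.symm⟩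

theorem resolvable_empty [TopologicalSpace X] : Resolvable (∅ : Set X) := by
  have := resolvable_compl (X := X) resolvable_univ
  simpa using this

theorem resolvable_inter [TopologicalSpace X] {H K : Set X} (hH : Resolvable H)
    (hK : Resolvable K) : Resolvable (H ∩ K) := by
  intro A hA
  obtain ⟨U, hU, hUA, hor⟩ := hH A hA
  rcases hor with h | h
  · obtain ⟨U', hU', hU'A, hor'⟩ := hK (U ∩ A) hUA
    refine ⟨U' ∩ U, hU'.inter hU, by rwa [Set.inter_assoc], ?_⟩
    rcases hor' with h' | h'
    · refine Or.inl ?_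
      rw [Set.inter_assoc]
      exact fun z hz => ⟨h hz.2, h' hz⟩
    · refine Or.inr ?_
      rw [Set.inter_assoc]
      exact fun z hz => fun hzc => (h' hz) hzc.2
  · exact ⟨U, hU, hUA, Or.inr (fun z hz => fun hzc => (h hz) hzc.1)⟩

theorem resolvable_union [TopologicalSpace X] {H K : Set X} (hH : Resolvable H)
    (hK : Resolvable K) : Resolvable (H ∪ K) := by
  have := resolvable_compl (resolvable_inter (resolvable_compl hH) (resolvable_compl hK))
  simpa [Set.compl_inter] using this

theorem resolvable_biUnion_lt [TopologicalSpace X] {H : ℕ → Set X}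
    (h : ∀ n, Resolvable (H n)) (n : ℕ) : Resolvable (⋃ m < n, H m) := by
  induction n with
  | zero => simpa using resolvable_empty
  | succ n ih =>
      have : (⋃ m < n + 1, H m) = (⋃ m < n, H m) ∪ H n := by
        ext z
        simp only [Set.mem_iUnion, Set.mem_union, Nat.lt_succ_iff_lt_or_eq]
        constructor
        · rintro ⟨m, hm | rfl, hz⟩
          · exact Or.inl ⟨m, hm, hz⟩
          · exact Or.inr hz
        · rintro (⟨m, hm, hz⟩ | hz)
          · exact ⟨m, Or.inl hm, hz⟩
          · exact ⟨n, Or.inr rfl, hz⟩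
      rw [this]
      exact resolvable_union ih (h n)

theorem resolvable_diff_biUnion [TopologicalSpace X] {H : ℕ → Set X}
    (h : ∀ n, Resolvable (H n)) (n : ℕ) : Resolvable (H n \ ⋃ m < n, H m) := by
  rw [Set.diff_eq]
  exact resolvable_inter (h n) (resolvable_compl (resolvable_biUnion_lt h n))

end Aux

/-- `(1/2)·σ-frag(f) ≤ d(f, σFrag(X,E)) ≤ σ-frag(f)`. -/
theorem stmt_6 {X E : Type*} [TopologicalSpace X] [MetricSpace E] (f : X → E) :
    sfragIdx f / 2 ≤ distToSFrag f ∧ distToSFrag f ≤ sfragIdx f := by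
  classical
  constructor
  · -- lower bound
    have lower : ∀ g : X → E, sfragIdx g = 0 → sfragIdx f ≤ 2 * unifDist f g := by
      intro g hg
      set d := unifDist f g with hd
      rcases eq_or_ne (2 * d) ⊤ with htop | htop
      · rw [htop]; exact le_top
      apply ENNReal.le_of_forall_pos_le_add
      intro η hη _
      have hlt : sInf {ε | 0 < ε ∧ ∃ H : ℕ → Set X, (∀ n, Resolvable (H n)) ∧
          (⋃ n, H n) = Set.univ ∧ ∀ n, EpsFragOn g (H n) ε} < (η : ℝ≥0∞) := by
        rw [show sInf {ε | 0 < ε ∧ ∃ H : ℕ → Set X, (∀ n, Resolvable (H n)) ∧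
            (⋃ n, H n) = Set.univ ∧ ∀ n, EpsFragOn g (H n) ε} = sfragIdx g from rfl, hg]
        exact_mod_cast hη
      obtain ⟨δ, hδS, hδlt⟩ := sInf_lt_iff.mp hlt
      obtain ⟨hδpos, H, hres, hcov, hfr⟩ := hδS
      have key : sfragIdx f ≤ δ + 2 * d := by
        apply sInf_le
        refine ⟨lt_of_lt_of_le hδpos le_self_add, H, hres, hcov, ?_⟩
        intro n F hF hFne
        obtain ⟨V, hV, hne', hdiam⟩ := hfr n F hF hFne
        refine ⟨V, hV, hne', ?_⟩
        apply EMetric.diam_le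
        rintro a ⟨y, hy, rfl⟩ b ⟨z, hz, rfl⟩
        have h1 : edist (f y) (g y) ≤ d := le_iSup (fun x => edist (f x) (g x)) y
        have h2 : edist (g z) (f z) ≤ d := by
          rw [edist_comm]
          exact le_iSup (fun x => edist (f x) (g x)) z
        have h3 : edist (g y) (g z) ≤ δ :=
          le_trans (EMetric.edist_le_diam_of_mem (Set.mem_image_of_mem g hy)
            (Set.mem_image_of_mem g hz)) hdiam
        calc edist (f y) (f z)
            ≤ edist (f y) (g y) + edist (g y) (g z) + edist (g z) (f z) := edist_triangle4 _ _ _ _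
          _ ≤ d + δ + d := add_le_add (add_le_add h1 h3) h2
          _ = δ + 2 * d := by ring
      calc sfragIdx f ≤ δ + 2 * d := key
        _ ≤ (η : ℝ≥0∞) + 2 * d := add_le_add hδlt.le le_rfl
        _ = 2 * d + (η : ℝ≥0∞) := add_comm _ _
    refine le_iInf ?_
    rintro ⟨g, hg⟩
    have := lower g hg
    rw [ENNReal.div_le_iff_le_mul (Or.inl two_ne_zero) (Or.inl (by norm_num))]
    calc sfragIdx f ≤ 2 * unifDist f g := this
      _ = unifDist f g * 2 := mul_comm _ _
  · -- upper bound
    apply le_sInf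
    rintro ε ⟨hεpos, H, hres, hcov, hfr⟩
    have hx : ∀ x : X, ∃ n, x ∈ H n := by
      intro x
      have : x ∈ ⋃ n, H n := hcov ▸ Set.mem_univ x
      exact Set.mem_iUnion.mp this
    set A : ℕ → Set X := fun n => H n \ ⋃ m < n, H m with hA
    set n₀ : X → ℕ := fun x => Nat.find (hx x) with hn₀
    have hxA : ∀ x, x ∈ A (n₀ x) := by
      intro x
      refine ⟨Nat.find_spec (hx x), ?_⟩
      simp only [Set.mem_iUnion, not_exists]
      exact fun m hm => Nat.find_min (hx x) hm
    have hn₀eq : ∀ y n, y ∈ A n → n₀ y = n := by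
      intro y n hy
      refine (Nat.find_eq_iff (hx y)).mpr ⟨hy.1, fun m hm hmem => ?_⟩
      exact hy.2 (Set.mem_iUnion.mpr ⟨m, Set.mem_iUnion.mpr ⟨hm, hmem⟩⟩)
    have hAfrag : ∀ n, EpsFragOn f (A n) ε :=
      fun n F hF hFne => hfr n F (hF.trans Set.diff_subset) hFne
    choose P h1 h2 h3 h4 h5 using fun n => exists_partition f (A n) ε (hAfrag n)
    -- representative picker
    set r : Set X → X → X := fun S dflt => if h : S.Nonempty then h.choose else dflt with hr
    have hrspec : ∀ (S : Set X) (dflt : X) (h : S.Nonempty), r S dflt = h.choose :=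
      fun S dflt h => dif_pos h
    set g : X → E := fun x => f (r (P (n₀ x) x) x) with hg
    have hPne : ∀ x, (P (n₀ x) x).Nonempty := fun x => ⟨x, h1 _ _ (hxA x)⟩
    have hrmem : ∀ x, r (P (n₀ x) x) x ∈ P (n₀ x) x := by
      intro x
      rw [hrspec _ _ (hPne x)]
      exact (hPne x).choose_spec
    -- g is uniformly close to f
    have hclose : unifDist f g ≤ ε := by
      refine iSup_le fun x => ?_
      have hfx : f x ∈ f '' P (n₀ x) x := Set.mem_image_of_mem f (h1 _ _ (hxA x))
      have hgx : g x ∈ f '' P (n₀ x) x := Set.mem_image_of_mem f (hrmem x)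
      exact le_trans (EMetric.edist_le_diam_of_mem hfx hgx) (h4 _ _ (hxA x))
    -- g takes a single value on each piece
    have hgval : ∀ (n : ℕ) (x : X) (hxAn : x ∈ A n), ∀ y, y ∈ A n → y ∈ P n x →
        g y = f ((⟨x, h1 n x hxAn⟩ : (P n x).Nonempty).choose) := by
      intro n x hxAn y hyAn hyP
      have hn : n₀ y = n := hn₀eq y n hyAn
      have hP : P n y = P n x := h3 n x hxAn y hyP
      show f (r (P (n₀ y) y) y) = _
      rw [hn, hP, hrspec _ _ ⟨x, h1 n x hxAn⟩]
    -- g is σ-fragmented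
    have hg0 : sfragIdx g = 0 := by
      have hgd : ∀ δ : ℝ≥0∞, 0 < δ → sfragIdx g ≤ δ := by
        intro δ hδ
        apply sInf_le
        refine ⟨hδ, A, fun n => resolvable_diff_biUnion hres n, ?_, ?_⟩
        · apply Set.eq_univ_of_forall
          intro x
          exact Set.mem_iUnion.mpr ⟨n₀ x, hxA x⟩
        · intro n F hF hFne
          obtain ⟨V, hVopen, hVF, x, hxAn, hsub⟩ := h5 n F hF hFne
          refine ⟨V, hVopen, hVF, ?_⟩
          apply EMetric.diam_le
          rintro a ⟨y, hy, rfl⟩ b ⟨z, hz, rfl⟩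
          have hy' : g y = f ((⟨x, h1 n x hxAn⟩ : (P n x).Nonempty).choose) :=
            hgval n x hxAn y (hF hy.2) (hsub hy)
          have hz' : g z = f ((⟨x, h1 n x hxAn⟩ : (P n x).Nonempty).choose) :=
            hgval n x hxAn z (hF hz.2) (hsub hz)
          rw [hy', hz', edist_self]
          exact zero_le
      have h1' : sfragIdx g ≤ 0 := by
        apply ENNReal.le_of_forall_pos_le_add
        intro η hη _
        rw [zero_add]
        exact hgd η (by exact_mod_cast hη)
      exact le_antisymm h1' zero_le
    calc distToSFrag f ≤ unifDist f (⟨g, hg0⟩ : {g : X → E // sfragIdx g = 0}).1 :=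
          iInf_le (fun g : {g : X → E // sfragIdx g = 0} => unifDist f g.1) ⟨g, hg0⟩
      _ ≤ ε := hclose
end

section
/- Let X be a topological space, (E,ρ) a metric space, and suppose h: X → E satisfies d(f,h) < α where h is σ-fragmented by resolvable sets with index < ε. Then f is (2α + ε)-σ-fragmented by the same resolvable sets; consequently σ-frag(f) ≤ 2·d(f, σFrag(X,E)). -/
open Set Filter Ordinal ENNReal

universe u v

private lemma frag_close {X E : Type*} [TopologicalSpace X] [MetricSpace E]
    (f h : X → E) (α ε : ℝ≥0∞) (hd : unifDist f h ≤ α)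
    (A : Set X) (hf : EpsFragOn h A ε) : EpsFragOn f A (2 * α + ε) := by
  intro F hFA hFne
  obtain ⟨V, hV, hne, hdiam⟩ := hf F hFA hFne
  refine ⟨V, hV, hne, EMetric.diam_le ?_⟩
  rintro _ ⟨x, hx, rfl⟩ _ ⟨y, hy, rfl⟩
  have h1 : edist (f x) (h x) ≤ α :=
    le_trans (le_iSup (fun x => edist (f x) (h x)) x) hd
  have h2 : edist (h y) (f y) ≤ α := by
    rw [edist_comm]; exact le_trans (le_iSup (fun x => edist (f x) (h x)) y) hd
  have h3 : edist (h x) (h y) ≤ ε :=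
    le_trans (EMetric.edist_le_diam_of_mem (mem_image_of_mem h hx) (mem_image_of_mem h hy)) hdiam
  calc edist (f x) (f y) ≤ edist (f x) (h x) + edist (h x) (h y) + edist (h y) (f y) :=
        edist_triangle4 _ _ _ _
    _ ≤ α + ε + α := add_le_add (add_le_add h1 h3) h2
    _ = 2 * α + ε := by ring

/-- if `d(f,h) < α` and `h` is `ε`-fragmented on each set of a countable
resolvable cover, then `f` is `(2α+ε)`-fragmented on the same sets; consequently
`σ-frag(f) ≤ 2 d(f, σFrag(X,E))`. -/
theorem stmt_8 {X E : Type*} [TopologicalSpace X] [MetricSpace E]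
    (f h : X → E) (α ε : ℝ≥0∞) (hd : unifDist f h < α)
    (H : ℕ → Set X) (hH : ∀ n, Resolvable (H n)) (hcov : (⋃ n, H n) = Set.univ)
    (hfrag : ∀ n, EpsFragOn h (H n) ε) :
    (∀ n, EpsFragOn f (H n) (2 * α + ε)) ∧ sfragIdx f ≤ 2 * distToSFrag f := by
  refine ⟨fun n => frag_close f h α ε hd.le _ (hfrag n), ?_⟩
  refine ENNReal.le_of_forall_pos_le_add fun δ hδ hlt => ?_
  have hDne : distToSFrag f ≠ ⊤ := by
    intro h'
    rw [h'] at hlt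
    simp at hlt
  set d4 : NNReal := δ / 4 with hd4
  set d2 : NNReal := δ / 2 with hd2
  have hd4pos : (0 : NNReal) < d4 := by positivity
  have hd2pos : (0 : NNReal) < d2 := by positivity
  obtain ⟨g, hg⟩ : ∃ g : {g : X → E // sfragIdx g = 0},
      unifDist f g.1 < distToSFrag f + d4 := by
    have h1 : distToSFrag f < distToSFrag f + d4 :=
      ENNReal.lt_add_right hDne (by exact_mod_cast hd4pos.ne')
    rw [distToSFrag] at h1 ⊢
    exact iInf_lt_iff.mp h1
  have hs : sfragIdx g.1 < (d2 : ℝ≥0∞) := by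
    rw [g.2]; exact_mod_cast hd2pos
  rw [sfragIdx] at hs
  obtain ⟨t, ht, htlt⟩ := sInf_lt_iff.mp hs
  obtain ⟨ht0, H', hH', hcov', hfr'⟩ := ht
  have hmem : (2 * (distToSFrag f + d4) + t) ∈ {ε | 0 < ε ∧ ∃ H : ℕ → Set X,
      (∀ n, Resolvable (H n)) ∧ (⋃ n, H n) = Set.univ ∧ ∀ n, EpsFragOn f (H n) ε} :=
    ⟨lt_of_lt_of_le ht0 le_add_self, H', hH', hcov',
      fun n => frag_close f g.1 _ t hg.le _ (hfr' n)⟩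
  have harith : 2 * ((d4 : ℝ≥0∞)) + (d2 : ℝ≥0∞) ≤ (δ : ℝ≥0∞) := by
    have : 2 * d4 + d2 ≤ δ := by
      rw [hd4, hd2]
      have hr : 2 * ((δ : ℝ) / 4) + (δ : ℝ) / 2 ≤ (δ : ℝ) := by linarith
      exact_mod_cast hr
    exact_mod_cast this
  calc sfragIdx f ≤ 2 * (distToSFrag f + d4) + t := sInf_le hmem
    _ ≤ 2 * distToSFrag f + (2 * d4 + d2) := by
        rw [mul_add]
        rw [add_assoc]
        exact add_le_add_right (add_le_add_right htlt.le _) _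
    _ ≤ 2 * distToSFrag f + δ := add_le_add_right harith _
end

section
/- Let X be a topological space, (E,ρ) a metric space, and ε > 0. Then for every mapping f: X → E, the oscillation rank β(f,ε) defined by the canonical transfinite derivation of open sets coincides with β*(f,ε), the least length κ of a transfinite sequence of open sets with property *(f,ε). -/
open Set Filter Ordinal ENNReal

universe u v

section Aux

variable {X : Type u} {E : Type v} [TopologicalSpace X] [PseudoEMetricSpace E]
variable (f : X → E) (ε : ℝ≥0∞)

lemma oscSet_zero : oscSet f ε 0 = (∅ : Set X) :=
  Ordinal.limitRecOn_zero ..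

lemma oscSet_succ (o : Ordinal.{u}) : oscSet f ε (o + 1) =
    oscSet f ε o ∪ {x | x ∉ oscSet f ε o ∧ ∃ V : Set X, IsOpen V ∧ x ∈ V ∧
      EMetric.diam (f '' (V \ oscSet f ε o)) < ε} :=
  Ordinal.limitRecOn_succ ..

lemma oscSet_limit {o : Ordinal.{u}} (ho : Order.IsSuccLimit o) :
    oscSet f ε o = ⋃ β < o, oscSet f ε β :=
  Ordinal.limitRecOn_limit _ _ _ _ ho

lemma oscSet_subset_succ (o : Ordinal.{u}) : oscSet f ε o ⊆ oscSet f ε (o + 1) := by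
  rw [oscSet_succ]; exact subset_union_left

lemma oscSet_mono : ∀ {a b : Ordinal.{u}}, a ≤ b → oscSet f ε a ⊆ oscSet f ε b := by
  intro a b
  induction b using Ordinal.limitRecOn with
  | zero =>
    intro h
    exact le_of_eq (congrArg _ (nonpos_iff_eq_zero.mp h))
  | add_one b ih =>
    intro h
    rcases lt_or_eq_of_le h with h' | h'
    · have hab : a ≤ b := by
        rw [Ordinal.add_one_eq_succ, Order.lt_succ_iff] at h'
        exact h'
      exact (ih hab).trans (oscSet_subset_succ f ε b)
    · exact le_of_eq (congrArg _ h')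
  | limit b hb ih =>
    intro h
    rcases lt_or_eq_of_le h with h' | h'
    · rw [oscSet_limit f ε hb]
      exact subset_iUnion₂_of_subset a h' subset_rfl
    · exact le_of_eq (congrArg _ h')

lemma oscSet_isOpen (o : Ordinal.{u}) : IsOpen (oscSet f ε o) := by
  induction o using Ordinal.limitRecOn with
  | zero => rw [oscSet_zero]; exact isOpen_empty
  | add_one b ih =>
    rw [oscSet_succ]
    have : oscSet f ε b ∪ {x | x ∉ oscSet f ε b ∧ ∃ V : Set X, IsOpen V ∧ x ∈ V ∧
        EMetric.diam (f '' (V \ oscSet f ε b)) < ε} =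
        oscSet f ε b ∪ {x | ∃ V : Set X, IsOpen V ∧ x ∈ V ∧
        EMetric.diam (f '' (V \ oscSet f ε b)) < ε} := by
      ext x
      constructor
      · rintro (h | ⟨-, h⟩)
        · exact Or.inl h
        · exact Or.inr h
      · rintro (h | h)
        · exact Or.inl h
        · by_cases hx : x ∈ oscSet f ε b
          · exact Or.inl hx
          · exact Or.inr ⟨hx, h⟩
    rw [this]
    refine ih.union ?_
    rw [isOpen_iff_forall_mem_open]
    rintro x ⟨V, hV, hxV, hd⟩
    exact ⟨V, fun y hy => ⟨V, hV, hy, hd⟩, hV, hxV⟩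
  | limit b hb ih =>
    rw [oscSet_limit f ε hb]
    exact isOpen_iUnion fun β => isOpen_iUnion fun h => ih β h

lemma starProp_le_oscSet {κ : Ordinal.{u}} {V : Ordinal.{u} → Set X}
    (hV : StarProp f ε κ V) : ∀ a : Ordinal.{u}, a ≤ κ → V a ⊆ oscSet f ε a := by
  obtain ⟨-, hmono, h0, -, hlim, hsucc⟩ := hV
  intro a
  induction a using Ordinal.limitRecOn with
  | zero => intro _; rw [h0, oscSet_zero]
  | add_one b ih =>
    intro h
    have hbκ : b < κ := lt_of_lt_of_le (by rw [Ordinal.add_one_eq_succ]; exact Order.lt_succ b) h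
    have ihb := ih hbκ.le
    intro x hx
    by_cases hxb : x ∈ V b
    · exact oscSet_subset_succ f ε b (ihb hxb)
    · obtain ⟨W, hW, hxW, hd⟩ := hsucc b hbκ x ⟨hx, hxb⟩
      rw [oscSet_succ]
      by_cases hxo : x ∈ oscSet f ε b
      · exact Or.inl hxo
      · refine Or.inr ⟨hxo, W, hW, hxW, lt_of_le_of_lt ?_ hd⟩
        exact EMetric.diam_mono (Set.image_mono (Set.diff_subset_diff_right ihb))
  | limit b hb ih =>
    intro h
    rw [hlim b h hb, oscSet_limit f ε hb]
    exact Set.iUnion₂_mono fun β hβ => ih β hβ (hβ.le.trans h)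

lemma oscSet_starProp {κ : Ordinal.{u}} (h : oscSet f ε κ = Set.univ) :
    StarProp f ε κ (oscSet f ε) := by
  refine ⟨fun α _ => oscSet_isOpen f ε α, fun α β hab _ => oscSet_mono f ε hab,
    oscSet_zero f ε, h, fun γ _ hγ => oscSet_limit f ε hγ, ?_⟩
  intro α hα x hx
  have := hx.1
  rw [oscSet_succ] at this
  rcases this with h' | ⟨-, W, hW, hxW, hd⟩
  · exact absurd h' hx.2
  · exact ⟨W, hW, hxW, hd⟩

end Aux


/-- the oscillation rank `β(f,ε)` defined by the canonical transfinite
derivation coincides with `β*(f,ε)`, the least length of a sequence with property `*(f,ε)`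
(including the case `∞`, expressed by the equivalence of nonemptiness). -/
theorem stmt_9 {X E : Type*} [TopologicalSpace X] [MetricSpace E]
    (f : X → E) (ε : ℝ≥0∞) (hε : 0 < ε) :
    sInf {α : Ordinal | oscSet f ε α = Set.univ} =
      sInf {κ : Ordinal | ∃ V : Ordinal → Set X, StarProp f ε κ V} ∧
    ({α : Ordinal | oscSet f ε α = Set.univ}.Nonempty ↔
      {κ : Ordinal | ∃ V : Ordinal → Set X, StarProp f ε κ V}.Nonempty) := by
  have hset : {α : Ordinal | oscSet f ε α = Set.univ} =
      {κ : Ordinal | ∃ V : Ordinal → Set X, StarProp f ε κ V} := by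
    ext κ
    constructor
    · intro h
      exact ⟨oscSet f ε, oscSet_starProp f ε h⟩
    · rintro ⟨V, hV⟩
      have := starProp_le_oscSet f ε hV κ le_rfl
      rw [hV.2.2.2.1] at this
      exact Set.univ_subset_iff.mp this
  rw [hset]
  exact ⟨rfl, Iff.rfl⟩
end
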